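/- The ISE between two exponential family densities has the closed form D_ISE(f(·|θ₁), f(·|θ₂)) = ∑_{i=1,2} [A(2θ_i)/A(θ_i)²]·E_{2θ_i}[h(X)] - 2·[A(θ₁+θ₂)/(A(θ₁)A(θ₂))]·E_{θ₁+θ₂}[h(X)], provided 2θ₁, 2θ₂, θ₁+θ₂ lie in the natural parameter space. -/

import Mathlib

open MeasureTheory Finset

/-- closed form of the ISE between two members of a full
exponential family `f(x|θ) = h(x) exp(θᵀT(x))/A(θ)`, provided `2θ₁`, `2θ₂`,
and `θ₁+θ₂` are in the natural parameter space:
`D_ISE = ∑_{i=1,2} A(2θᵢ)/A(θᵢ)²·E_{2θᵢ}[h] - 2·A(θ₁+θ₂)/(A(θ₁)A(θ₂))·E_{θ₁+θ₂}[h]`. -/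
theorem stmt_18 {α : Type*} [MeasurableSpace α] (μ : Measure α)
    (k : ℕ) (T : α → Fin k → ℝ) (h : α → ℝ) (hh : ∀ x, 0 ≤ h x)
    (A : (Fin k → ℝ) → ℝ)
    (hA : ∀ θ : Fin k → ℝ, A θ = ∫ x, h x * Real.exp (∑ i, θ i * T x i) ∂μ)
    (θ₁ θ₂ : Fin k → ℝ)
    (hApos : ∀ θ ∈ ({θ₁, θ₂, 2 • θ₁, 2 • θ₂, θ₁ + θ₂} : Set (Fin k → ℝ)), 0 < A θ)
    (hAint : ∀ θ ∈ ({θ₁, θ₂, 2 • θ₁, 2 • θ₂, θ₁ + θ₂} : Set (Fin k → ℝ)),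
      Integrable (fun x => h x * Real.exp (∑ i, θ i * T x i)) μ)
    (hsqint : ∀ θ ∈ ({2 • θ₁, 2 • θ₂, θ₁ + θ₂} : Set (Fin k → ℝ)),
      Integrable (fun x => h x ^ 2 * Real.exp (∑ i, θ i * T x i)) μ)
    (f : (Fin k → ℝ) → α → ℝ)
    (hf : ∀ θ x, f θ x = h x * Real.exp (∑ i, θ i * T x i) / A θ)
    (Eh : (Fin k → ℝ) → ℝ) (hEh : ∀ θ, Eh θ = ∫ x, h x * f θ x ∂μ) :
    (∫ x, (f θ₁ x - f θ₂ x) ^ 2 ∂μ)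
      = (A (2 • θ₁) / (A θ₁) ^ 2) * Eh (2 • θ₁)
        + (A (2 • θ₂) / (A θ₂) ^ 2) * Eh (2 • θ₂)
        - 2 * (A (θ₁ + θ₂) / (A θ₁ * A θ₂)) * Eh (θ₁ + θ₂) := by
  have hc : A θ₁ ≠ 0 := (hApos θ₁ (by simp)).ne'
  have hd : A θ₂ ≠ 0 := (hApos θ₂ (by simp)).ne'
  have h1 : A (2 • θ₁) ≠ 0 := (hApos _ (by simp)).ne'
  have h2 : A (2 • θ₂) ≠ 0 := (hApos _ (by simp)).ne'
  have h3 : A (θ₁ + θ₂) ≠ 0 := (hApos _ (by simp)).ne'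
  set g : (Fin k → ℝ) → α → ℝ :=
    fun θ x => h x ^ 2 * Real.exp (∑ i, θ i * T x i) with hg
  have hint1 : Integrable (g (2 • θ₁)) μ := hsqint _ (by simp)
  have hint2 : Integrable (g (2 • θ₂)) μ := hsqint _ (by simp)
  have hint3 : Integrable (g (θ₁ + θ₂)) μ := hsqint _ (by simp)
  have hEh' : ∀ θ, A θ ≠ 0 → Eh θ = (A θ)⁻¹ * ∫ x, g θ x ∂μ := by
    intro θ hθ
    rw [hEh θ]
    have he : ∀ x, h x * f θ x = (A θ)⁻¹ * g θ x := by
      intro x; rw [hf, hg]; field_simp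
    simp_rw [he]
    rw [integral_const_mul]
  have hdouble : ∀ (θ : Fin k → ℝ) (x : α),
      ∑ i, (2 • θ) i * T x i = (∑ i, θ i * T x i) + ∑ i, θ i * T x i := by
    intro θ x
    rw [← Finset.sum_add_distrib]
    refine Finset.sum_congr rfl fun i _ => ?_
    simp [two_smul]; ring
  have hplus : ∀ x : α,
      ∑ i, (θ₁ + θ₂) i * T x i = (∑ i, θ₁ i * T x i) + ∑ i, θ₂ i * T x i := by
    intro x
    rw [← Finset.sum_add_distrib]
    refine Finset.sum_congr rfl fun i _ => ?_
    simp [add_mul]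
  have pw : ∀ x, (f θ₁ x - f θ₂ x) ^ 2
      = (A θ₁)⁻¹ ^ 2 * g (2 • θ₁) x + (A θ₂)⁻¹ ^ 2 * g (2 • θ₂) x
        - 2 * (A θ₁ * A θ₂)⁻¹ * g (θ₁ + θ₂) x := by
    intro x
    simp only [hf, hg, hdouble, hplus, Real.exp_add]
    field_simp
    ring
  have hLHS : (∫ x, (f θ₁ x - f θ₂ x) ^ 2 ∂μ)
      = (A θ₁)⁻¹ ^ 2 * (∫ x, g (2 • θ₁) x ∂μ)
        + (A θ₂)⁻¹ ^ 2 * (∫ x, g (2 • θ₂) x ∂μ)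
        - 2 * (A θ₁ * A θ₂)⁻¹ * (∫ x, g (θ₁ + θ₂) x ∂μ) := by
    simp_rw [pw]
    rw [integral_sub (by exact (hint1.const_mul _).add (hint2.const_mul _))
        (hint3.const_mul _),
      integral_add (hint1.const_mul _) (hint2.const_mul _),
      integral_const_mul, integral_const_mul, integral_const_mul]
  have key : ∀ a c I : ℝ, a ≠ 0 → a / c * (a⁻¹ * I) = c⁻¹ * I := by
    intro a c I ha
    field_simp
  rw [hLHS, hEh' _ h1, hEh' _ h2, hEh' _ h3,
    mul_assoc 2 (A (θ₁ + θ₂) / (A θ₁ * A θ₂)),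
    key _ _ _ h1, key _ _ _ h2, key _ _ _ h3]
  ring
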